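/- The exact S-step dynamics preserve total mass at the matrix level: if S(t) satisfies dS_{ij}/dt = −Σ_{k,l} S_{kl} (e_{ijkl} − f_{ijkl}) with e and f given by the inner products of the shifted and unshifted propensity forms against fixed orthonormal factors X⁰, X¹, and if the constant function 1 on Ω⁰ × Ω¹ lies in the span of the products {X⁰_i X¹_j}, then Σ_{x⁰,x¹} Σ_{ij} X⁰_i(x⁰) S_{ij}(t) X¹_j(x¹) is constant in time. -/

import Mathlib

open scoped BigOperators

/-- Interchange: move the outer two sums past the inner three. -/
lemma S_step_aux_ex5 {A B C D E : Type*} (sa : Finset A) (sb : Finset B) (sc : Finset C)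
    (sd : Finset D) (se : Finset E) (g : A → B → C → D → E → ℝ) :
    ∑ a ∈ sa, ∑ b ∈ sb, ∑ c ∈ sc, ∑ d ∈ sd, ∑ e ∈ se, g a b c d e
      = ∑ c ∈ sc, ∑ d ∈ sd, ∑ e ∈ se, ∑ a ∈ sa, ∑ b ∈ sb, g a b c d e :=
  calc ∑ a ∈ sa, ∑ b ∈ sb, ∑ c ∈ sc, ∑ d ∈ sd, ∑ e ∈ se, g a b c d e
      = ∑ a ∈ sa, ∑ c ∈ sc, ∑ d ∈ sd, ∑ e ∈ se, ∑ b ∈ sb, g a b c d e := by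
        refine Finset.sum_congr rfl fun a _ => ?_
        rw [Finset.sum_comm]
        refine Finset.sum_congr rfl fun c _ => ?_
        rw [Finset.sum_comm]
        exact Finset.sum_congr rfl fun d _ => Finset.sum_comm
    _ = ∑ c ∈ sc, ∑ d ∈ sd, ∑ e ∈ se, ∑ a ∈ sa, ∑ b ∈ sb, g a b c d e := by
        rw [Finset.sum_comm]
        refine Finset.sum_congr rfl fun c _ => ?_
        rw [Finset.sum_comm]
        exact Finset.sum_congr rfl fun d _ => Finset.sum_comm

/-- Interchange: move the outer two sums past the inner two. -/
lemma S_step_aux_ex4 {A B C D : Type*} (sa : Finset A) (sb : Finset B) (sc : Finset C)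
    (sd : Finset D) (g : A → B → C → D → ℝ) :
    ∑ a ∈ sa, ∑ b ∈ sb, ∑ c ∈ sc, ∑ d ∈ sd, g a b c d
      = ∑ c ∈ sc, ∑ d ∈ sd, ∑ a ∈ sa, ∑ b ∈ sb, g a b c d :=
  calc ∑ a ∈ sa, ∑ b ∈ sb, ∑ c ∈ sc, ∑ d ∈ sd, g a b c d
      = ∑ a ∈ sa, ∑ c ∈ sc, ∑ d ∈ sd, ∑ b ∈ sb, g a b c d := by
        refine Finset.sum_congr rfl fun a _ => ?_
        rw [Finset.sum_comm]
        exact Finset.sum_congr rfl fun c _ => Finset.sum_comm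
    _ = ∑ c ∈ sc, ∑ d ∈ sd, ∑ a ∈ sa, ∑ b ∈ sb, g a b c d := by
        rw [Finset.sum_comm]
        exact Finset.sum_congr rfl fun c _ => Finset.sum_comm

/-- Reindexing of the shifted sum (out-of-range terms omitted consistently). -/
lemma S_step_aux_shift {d0 d1 : ℕ} (Ω0 : Finset (Fin d0 → ℤ)) (Ω1 : Finset (Fin d1 → ℤ))
    (v0 : Fin d0 → ℤ) (v1 : Fin d1 → ℤ) (F : (Fin d0 → ℤ) → (Fin d1 → ℤ) → ℝ) :
    (∑ y0 ∈ Ω0, ∑ y1 ∈ Ω1, if y0 - v0 ∈ Ω0 ∧ y1 - v1 ∈ Ω1 then F (y0 - v0) (y1 - v1) else 0)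
      = ∑ z0 ∈ Ω0, ∑ z1 ∈ Ω1, if z0 + v0 ∈ Ω0 ∧ z1 + v1 ∈ Ω1 then F z0 z1 else 0 := by
  rw [← Finset.sum_product', ← Finset.sum_product']
  rw [← Finset.sum_filter, ← Finset.sum_filter]
  refine Finset.sum_nbij' (fun p => (p.1 - v0, p.2 - v1)) (fun p => (p.1 + v0, p.2 + v1))
    ?_ ?_ ?_ ?_ ?_
  · intro p hp
    simp only [Finset.mem_filter, Finset.mem_product] at hp ⊢
    refine ⟨⟨hp.2.1, hp.2.2⟩, ?_, ?_⟩ <;> simp [hp.1.1, hp.1.2]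
  · intro p hp
    simp only [Finset.mem_filter, Finset.mem_product] at hp ⊢
    refine ⟨⟨hp.2.1, hp.2.2⟩, ?_, ?_⟩ <;> simp [hp.1.1, hp.1.2]
  · intro p _; simp
  · intro p _; simp
  · intro p _; rfl

/-- The exact S-step dynamics preserve the total mass at the matrix
level: if `S(t)` satisfies `dS_{ij}/dt = -Σ_{kl} S_{kl} (e_{ijkl} - f_{ijkl})` with
`e`, `f` the inner products of the shifted and unshifted propensity forms against
fixed orthonormal factors (out-of-range terms omitted on both shifted factors
consistently), and the constant function `1` on `Ω⁰ × Ω¹` lies in the span of the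
products `X⁰_i X¹_j`, then `Σ_{x⁰,x¹} Σ_{ij} X⁰_i(x⁰) S_{ij}(t) X¹_j(x¹)` is
constant in time. -/
theorem S_step_mass_conservation
    (d0 d1 M r : ℕ)
    (ν0 : Fin M → (Fin d0 → ℤ)) (ν1 : Fin M → (Fin d1 → ℤ))
    (α : Fin M → (Fin d0 → ℤ) → (Fin d1 → ℤ) → ℝ)
    (Ω0 : Finset (Fin d0 → ℤ)) (Ω1 : Finset (Fin d1 → ℤ))
    (X0 : Fin r → (Fin d0 → ℤ) → ℝ) (X1 : Fin r → (Fin d1 → ℤ) → ℝ)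
    (hX0 : ∀ i j, ∑ x0 ∈ Ω0, X0 i x0 * X0 j x0 = if i = j then 1 else 0)
    (hX1 : ∀ i j, ∑ x1 ∈ Ω1, X1 i x1 * X1 j x1 = if i = j then 1 else 0)
    (hspan : ∃ c : Fin r → Fin r → ℝ, ∀ x0 ∈ Ω0, ∀ x1 ∈ Ω1,
      (1 : ℝ) = ∑ i, ∑ j, c i j * X0 i x0 * X1 j x1)
    (e f : Fin r → Fin r → Fin r → Fin r → ℝ)
    (he : ∀ i j k l, e i j k l = ∑ μ, ∑ x0 ∈ Ω0, ∑ x1 ∈ Ω1,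
      X0 i x0 * X1 j x1 *
        (if x0 - ν0 μ ∈ Ω0 ∧ x1 - ν1 μ ∈ Ω1 then
          α μ (x0 - ν0 μ) (x1 - ν1 μ) * X0 k (x0 - ν0 μ) * X1 l (x1 - ν1 μ)
        else 0))
    (hf : ∀ i j k l, f i j k l = ∑ μ, ∑ x0 ∈ Ω0, ∑ x1 ∈ Ω1,
      X0 i x0 * X1 j x1 *
        (if x0 + ν0 μ ∈ Ω0 ∧ x1 + ν1 μ ∈ Ω1 then
          α μ x0 x1 * X0 k x0 * X1 l x1
        else 0))
    (S : ℝ → Fin r → Fin r → ℝ)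
    (hS : ∀ t i j, HasDerivAt (fun s => S s i j)
      (-∑ k, ∑ l, S t k l * (e i j k l - f i j k l)) t) :
    ∀ t : ℝ,
      ∑ x0 ∈ Ω0, ∑ x1 ∈ Ω1, ∑ i, ∑ j, X0 i x0 * S t i j * X1 j x1 =
      ∑ x0 ∈ Ω0, ∑ x1 ∈ Ω1, ∑ i, ∑ j, X0 i x0 * S 0 i j * X1 j x1 := by
  obtain ⟨c, hc⟩ := hspan
  set T0 : Fin r → ℝ := fun i => ∑ x0 ∈ Ω0, X0 i x0 with hT0def
  set T1 : Fin r → ℝ := fun j => ∑ x1 ∈ Ω1, X1 j x1 with hT1def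
  -- Step A: T0 i * T1 j = c i j
  have hcT : ∀ i j, T0 i * T1 j = c i j := by
    intro i j
    have h1 : T0 i * T1 j = ∑ x0 ∈ Ω0, ∑ x1 ∈ Ω1, X0 i x0 * X1 j x1 :=
      Finset.sum_mul_sum _ _ _ _
    rw [h1]
    calc ∑ x0 ∈ Ω0, ∑ x1 ∈ Ω1, X0 i x0 * X1 j x1
        = ∑ x0 ∈ Ω0, ∑ x1 ∈ Ω1, ∑ p, ∑ q,
            c p q * (X0 p x0 * X0 i x0) * (X1 q x1 * X1 j x1) := by
          refine Finset.sum_congr rfl fun x0 h0 => Finset.sum_congr rfl fun x1 h1x => ?_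
          calc X0 i x0 * X1 j x1 = 1 * (X0 i x0 * X1 j x1) := by ring
            _ = (∑ p, ∑ q, c p q * X0 p x0 * X1 q x1) * (X0 i x0 * X1 j x1) := by
                rw [← hc x0 h0 x1 h1x]
            _ = ∑ p, ∑ q, c p q * (X0 p x0 * X0 i x0) * (X1 q x1 * X1 j x1) := by
                rw [Finset.sum_mul]
                refine Finset.sum_congr rfl fun p _ => ?_
                rw [Finset.sum_mul]
                exact Finset.sum_congr rfl fun q _ => by ring
      _ = ∑ p, ∑ q, ∑ x0 ∈ Ω0, ∑ x1 ∈ Ω1,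
            c p q * (X0 p x0 * X0 i x0) * (X1 q x1 * X1 j x1) :=
          S_step_aux_ex4 _ _ _ _ _
      _ = ∑ p, ∑ q, c p q * (∑ x0 ∈ Ω0, X0 p x0 * X0 i x0) *
            (∑ x1 ∈ Ω1, X1 q x1 * X1 j x1) := by
          refine Finset.sum_congr rfl fun p _ => Finset.sum_congr rfl fun q _ => ?_
          rw [← Finset.sum_mul_sum, ← Finset.mul_sum]
      _ = c i j := by
          simp only [hX0, hX1, mul_ite, ite_mul, mul_one, mul_zero, zero_mul, one_mul]
          simp [Finset.sum_ite_eq', Finset.sum_ite_eq]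
  -- projection of 1 is 1
  have hone : ∀ y0 ∈ Ω0, ∀ y1 ∈ Ω1,
      ∑ i, ∑ j, T0 i * T1 j * (X0 i y0 * X1 j y1) = 1 := by
    intro y0 h0 y1 h1
    rw [hc y0 h0 y1 h1]
    refine Finset.sum_congr rfl fun i _ => Finset.sum_congr rfl fun j _ => ?_
    rw [hcT]; ring
  -- collapse lemma
  have key : ∀ (G : ℝ) (y0 : Fin d0 → ℤ), y0 ∈ Ω0 → ∀ (y1 : Fin d1 → ℤ), y1 ∈ Ω1 →
      ∑ i, ∑ j, T0 i * T1 j * (X0 i y0 * X1 j y1 * G) = G := by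
    intro G y0 h0 y1 h1
    calc ∑ i, ∑ j, T0 i * T1 j * (X0 i y0 * X1 j y1 * G)
        = (∑ i, ∑ j, T0 i * T1 j * (X0 i y0 * X1 j y1)) * G := by
          rw [Finset.sum_mul]
          refine Finset.sum_congr rfl fun i _ => ?_
          rw [Finset.sum_mul]
          exact Finset.sum_congr rfl fun j _ => by ring
      _ = 1 * G := by rw [hone y0 h0 y1 h1]
      _ = G := one_mul G
  -- Step B: the tested e and f coincide
  have hef : ∀ k l, (∑ i, ∑ j, T0 i * T1 j * e i j k l)
      = ∑ i, ∑ j, T0 i * T1 j * f i j k l := by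
    intro k l
    have hE : (∑ i, ∑ j, T0 i * T1 j * e i j k l)
        = ∑ μ, ∑ y0 ∈ Ω0, ∑ y1 ∈ Ω1,
            (if y0 - ν0 μ ∈ Ω0 ∧ y1 - ν1 μ ∈ Ω1 then
              α μ (y0 - ν0 μ) (y1 - ν1 μ) * X0 k (y0 - ν0 μ) * X1 l (y1 - ν1 μ)
            else 0) := by
      simp only [he, Finset.mul_sum]
      rw [S_step_aux_ex5]
      refine Finset.sum_congr rfl fun μ _ => Finset.sum_congr rfl fun y0 h0 =>
        Finset.sum_congr rfl fun y1 h1 => ?_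
      exact key _ y0 h0 y1 h1
    have hF : (∑ i, ∑ j, T0 i * T1 j * f i j k l)
        = ∑ μ, ∑ y0 ∈ Ω0, ∑ y1 ∈ Ω1,
            (if y0 + ν0 μ ∈ Ω0 ∧ y1 + ν1 μ ∈ Ω1 then
              α μ y0 y1 * X0 k y0 * X1 l y1
            else 0) := by
      simp only [hf, Finset.mul_sum]
      rw [S_step_aux_ex5]
      refine Finset.sum_congr rfl fun μ _ => Finset.sum_congr rfl fun y0 h0 =>
        Finset.sum_congr rfl fun y1 h1 => ?_
      exact key _ y0 h0 y1 h1
    rw [hE, hF]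
    exact Finset.sum_congr rfl fun μ _ =>
      S_step_aux_shift Ω0 Ω1 (ν0 μ) (ν1 μ) (fun z0 z1 => α μ z0 z1 * X0 k z0 * X1 l z1)
  -- factor the mass through T0, T1
  have massfactor : ∀ D : Fin r → Fin r → ℝ,
      (∑ x0 ∈ Ω0, ∑ x1 ∈ Ω1, ∑ i, ∑ j, X0 i x0 * D i j * X1 j x1)
        = ∑ i, ∑ j, T0 i * D i j * T1 j := by
    intro D
    rw [S_step_aux_ex4]
    refine Finset.sum_congr rfl fun i _ => Finset.sum_congr rfl fun j _ => ?_
    calc ∑ x0 ∈ Ω0, ∑ x1 ∈ Ω1, X0 i x0 * D i j * X1 j x1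
        = (∑ x0 ∈ Ω0, X0 i x0 * D i j) * ∑ x1 ∈ Ω1, X1 j x1 :=
          (Finset.sum_mul_sum _ _ _ _).symm
      _ = T0 i * D i j * T1 j := by rw [← Finset.sum_mul]
  -- derivative of the total mass is zero
  have hm : ∀ t, HasDerivAt
      (fun s => ∑ x0 ∈ Ω0, ∑ x1 ∈ Ω1, ∑ i, ∑ j, X0 i x0 * S s i j * X1 j x1) 0 t := by
    intro t
    have H : HasDerivAt
        (fun s => ∑ x0 ∈ Ω0, ∑ x1 ∈ Ω1, ∑ i, ∑ j, X0 i x0 * S s i j * X1 j x1)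
        (∑ x0 ∈ Ω0, ∑ x1 ∈ Ω1, ∑ i, ∑ j,
          X0 i x0 * (-∑ k, ∑ l, S t k l * (e i j k l - f i j k l)) * X1 j x1) t := by
      refine HasDerivAt.fun_sum fun x0 _ => HasDerivAt.fun_sum fun x1 _ =>
        HasDerivAt.fun_sum fun i _ => HasDerivAt.fun_sum fun j _ => ?_
      exact ((hS t i j).const_mul (X0 i x0)).mul_const (X1 j x1)
    have hz : (∑ x0 ∈ Ω0, ∑ x1 ∈ Ω1, ∑ i, ∑ j,
        X0 i x0 * (-∑ k, ∑ l, S t k l * (e i j k l - f i j k l)) * X1 j x1) = 0 := by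
      rw [massfactor]
      have hterm : ∀ i j : Fin r,
          T0 i * (-∑ k, ∑ l, S t k l * (e i j k l - f i j k l)) * T1 j
            = -∑ k, ∑ l, S t k l *
                (T0 i * T1 j * e i j k l - T0 i * T1 j * f i j k l) := by
        intro i j
        rw [mul_neg, neg_mul, neg_inj]
        simp only [Finset.mul_sum, Finset.sum_mul]
        refine Finset.sum_congr rfl fun k _ => Finset.sum_congr rfl fun l _ => by ring
      simp only [hterm]
      simp only [Finset.sum_neg_distrib]
      rw [neg_eq_zero]
      rw [S_step_aux_ex4]
      refine Finset.sum_eq_zero fun k _ => Finset.sum_eq_zero fun l _ => ?_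
      calc ∑ i, ∑ j, S t k l * (T0 i * T1 j * e i j k l - T0 i * T1 j * f i j k l)
          = S t k l * ∑ i, ∑ j,
              (T0 i * T1 j * e i j k l - T0 i * T1 j * f i j k l) := by
            rw [Finset.mul_sum]
            refine Finset.sum_congr rfl fun i _ => ?_
            rw [Finset.mul_sum]
        _ = S t k l * ((∑ i, ∑ j, T0 i * T1 j * e i j k l)
              - ∑ i, ∑ j, T0 i * T1 j * f i j k l) := by
            simp only [Finset.sum_sub_distrib]
        _ = 0 := by rw [hef k l, sub_self, mul_zero]
    rw [← hz]
    exact H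
  intro t
  exact is_const_of_deriv_eq_zero
    (fun s => (hm s).differentiableAt)
    (fun s => (hm s).deriv) t 0
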